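/- Let H_2(k_1,k_2) be the tree with root y, vertices a_1,…,a_{k_1}, b_1,…,b_{k_1}, c_1,…,c_{k_2}, and edges {a_i b_i}, {a_i y} for 1 ≤ i ≤ k_1 and {c_j y} for 1 ≤ j ≤ k_2. If m = 2k_1 + k_2 + 1 is the total number of vertices and m ≥ 4, then the number of multipackings of H_2(k_1,k_2) is at most (3/8)m² − (1/2)m + 17/8. -/

import Mathlib

def Multipacking {V : Type*} (G : SimpleGraph V) (M : Finset V) : Prop :=
  ∀ v : V, ∀ r : ℕ, 1 ≤ r → ({u : V | u ∈ M ∧ G.edist v u ≤ r}).ncard ≤ r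

/-- Vertices of the tree `H₂(k₁,k₂)`: `none` is the root `y`, `some (inl i)` is `aᵢ`,
`some (inr (inl i))` is `bᵢ`, and `some (inr (inr j))` is `cⱼ`. -/
abbrev H2V (k₁ k₂ : ℕ) := Option (Fin k₁ ⊕ (Fin k₁ ⊕ Fin k₂))

/-- The tree `H₂(k₁,k₂)` with root `y`, edges `y aᵢ`, `aᵢ bᵢ` and `y cⱼ`. -/
def H2 (k₁ k₂ : ℕ) : SimpleGraph (H2V k₁ k₂) :=
  SimpleGraph.fromRel (fun x y =>
    (∃ i : Fin k₁, x = none ∧ y = some (Sum.inl i)) ∨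
    (∃ i : Fin k₁, x = some (Sum.inl i) ∧ y = some (Sum.inr (Sum.inl i))) ∨
    (∃ j : Fin k₂, x = none ∧ y = some (Sum.inr (Sum.inr j))))

namespace H2Aux

variable {k₁ k₂ : ℕ}

lemma adj_ya (i : Fin k₁) : (H2 k₁ k₂).Adj none (some (Sum.inl i)) := by simp [H2]

lemma adj_ab (i : Fin k₁) :
    (H2 k₁ k₂).Adj (some (Sum.inl i)) (some (Sum.inr (Sum.inl i))) := by simp [H2]

lemma adj_yc (j : Fin k₂) : (H2 k₁ k₂).Adj none (some (Sum.inr (Sum.inr j))) := by simp [H2]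

lemma edist_root_le (u : H2V k₁ k₂) : (H2 k₁ k₂).edist none u ≤ 2 := by
  match u with
  | none => simp [SimpleGraph.edist_self]
  | some (Sum.inl i) =>
      have := (SimpleGraph.edist_eq_one_iff_adj.mpr (adj_ya (k₂ := k₂) i)).le
      exact this.trans (by norm_num)
  | some (Sum.inr (Sum.inl i)) =>
      have h1 := (SimpleGraph.edist_eq_one_iff_adj.mpr (adj_ya (k₂ := k₂) i)).le
      have h2 := (SimpleGraph.edist_eq_one_iff_adj.mpr (adj_ab (k₂ := k₂) i)).le
      calc (H2 k₁ k₂).edist none (some (Sum.inr (Sum.inl i)))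
          ≤ _ + _ := SimpleGraph.edist_triangle (v := some (Sum.inl i))
        _ ≤ 1 + 1 := add_le_add h1 h2
        _ = 2 := by norm_num
  | some (Sum.inr (Sum.inr j)) =>
      have := (SimpleGraph.edist_eq_one_iff_adj.mpr (adj_yc (k₁ := k₁) j)).le
      exact this.trans (by norm_num)

/-- The key `r = 1` constraint: two distinct members of a multipacking cannot both be
within distance 1 of a common vertex. -/
lemma no_close_pair {M : Finset (H2V k₁ k₂)} (hM : Multipacking (H2 k₁ k₂) M)
    {u v w : H2V k₁ k₂} (hu : u ∈ M) (hv : v ∈ M) (huv : u ≠ v)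
    (hwu : (H2 k₁ k₂).edist w u ≤ 1) (hwv : (H2 k₁ k₂).edist w v ≤ 1) : False := by
  have h := hM w 1 le_rfl
  have hsub : ({u, v} : Set (H2V k₁ k₂)) ⊆ {x | x ∈ M ∧ (H2 k₁ k₂).edist w x ≤ 1} := by
    rintro x (rfl | rfl) <;> exact ⟨by assumption, by assumption⟩
  have h2 : (({u, v} : Set (H2V k₁ k₂))).ncard ≤ 1 :=
    le_trans (Set.ncard_le_ncard hsub (Set.toFinite _)) h
  rw [Set.ncard_pair huv] at h2
  omega

lemma card_le_two {M : Finset (H2V k₁ k₂)} (hM : Multipacking (H2 k₁ k₂) M) : M.card ≤ 2 := by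
  have h := hM none 2 (by norm_num)
  have heq : {u : H2V k₁ k₂ | u ∈ M ∧ (H2 k₁ k₂).edist none u ≤ (2 : ℕ)} = ↑M := by
    ext u
    have := edist_root_le (k₁ := k₁) (k₂ := k₂) u
    simp only [Set.mem_setOf_eq, Finset.mem_coe, Nat.cast_ofNat, and_iff_left_iff_imp]
    exact fun _ => this
  rw [heq, Set.ncard_coe_finset] at h
  exact_mod_cast h

lemma edist_self_le_one (u : H2V k₁ k₂) : (H2 k₁ k₂).edist u u ≤ 1 := by
  simp [SimpleGraph.edist_self]

lemma adj_edist_le_one {u v : H2V k₁ k₂} (h : (H2 k₁ k₂).Adj u v) :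
    (H2 k₁ k₂).edist u v ≤ 1 :=
  (SimpleGraph.edist_eq_one_iff_adj.mpr h).le

/-- Classification of two-element multipackings. -/
lemma pair_cases {M : Finset (H2V k₁ k₂)} (hM : Multipacking (H2 k₁ k₂) M)
    {u v : H2V k₁ k₂} (hu : u ∈ M) (hv : v ∈ M) (huv : u ≠ v) :
    (∃ i j : Fin k₁, i ≠ j ∧
        ({u, v} : Finset (H2V k₁ k₂)) = {some (Sum.inr (Sum.inl i)), some (Sum.inr (Sum.inl j))}) ∨
    (∃ (i j : Fin k₁), i ≠ j ∧
        ({u, v} : Finset (H2V k₁ k₂)) = {some (Sum.inl i), some (Sum.inr (Sum.inl j))}) ∨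
    (∃ (i : Fin k₁) (j : Fin k₂),
        ({u, v} : Finset (H2V k₁ k₂)) = {some (Sum.inr (Sum.inl i)), some (Sum.inr (Sum.inr j))}) := by
  have key : ∀ w, (H2 k₁ k₂).edist w u ≤ 1 → (H2 k₁ k₂).edist w v ≤ 1 → False :=
    fun w h1 h2 => no_close_pair hM hu hv huv h1 h2
  have keysymm : ∀ w, (H2 k₁ k₂).edist w v ≤ 1 → (H2 k₁ k₂).edist w u ≤ 1 → False :=
    fun w h1 h2 => no_close_pair hM hv hu (Ne.symm huv) h1 h2
  -- helper distances
  match u, v with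
  | none, none => exact absurd rfl huv
  | none, some (Sum.inl i) =>
      exact absurd (key none (edist_self_le_one _) (adj_edist_le_one (adj_ya i))) not_false
  | none, some (Sum.inr (Sum.inl i)) =>
      refine absurd (key (some (Sum.inl i)) ?_ (adj_edist_le_one (adj_ab i))) not_false
      rw [SimpleGraph.edist_comm]; exact adj_edist_le_one (adj_ya i)
  | none, some (Sum.inr (Sum.inr j)) =>
      exact absurd (key none (edist_self_le_one _) (adj_edist_le_one (adj_yc j))) not_false
  | some (Sum.inl i), none =>
      exact absurd (keysymm none (edist_self_le_one _) (adj_edist_le_one (adj_ya i))) not_false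
  | some (Sum.inr (Sum.inl i)), none =>
      refine absurd (keysymm (some (Sum.inl i)) ?_ (adj_edist_le_one (adj_ab i))) not_false
      rw [SimpleGraph.edist_comm]; exact adj_edist_le_one (adj_ya i)
  | some (Sum.inr (Sum.inr j)), none =>
      exact absurd (keysymm none (edist_self_le_one _) (adj_edist_le_one (adj_yc j))) not_false
  | some (Sum.inl i), some (Sum.inl i') =>
      exact absurd (key none (adj_edist_le_one (adj_ya i)) (adj_edist_le_one (adj_ya i'))) not_false
  | some (Sum.inl i), some (Sum.inr (Sum.inr j)) =>
      exact absurd (key none (adj_edist_le_one (adj_ya i)) (adj_edist_le_one (adj_yc j))) not_false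
  | some (Sum.inr (Sum.inr j)), some (Sum.inl i) =>
      exact absurd (keysymm none (adj_edist_le_one (adj_ya i)) (adj_edist_le_one (adj_yc j)))
        not_false
  | some (Sum.inr (Sum.inr j)), some (Sum.inr (Sum.inr j')) =>
      exact absurd (key none (adj_edist_le_one (adj_yc j)) (adj_edist_le_one (adj_yc j')))
        not_false
  | some (Sum.inl i), some (Sum.inr (Sum.inl i')) =>
      rcases eq_or_ne i i' with rfl | hii
      · exact absurd (key (some (Sum.inl i)) (edist_self_le_one _)
          (adj_edist_le_one (adj_ab i))) not_false
      · exact Or.inr (Or.inl ⟨i, i', hii, rfl⟩)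
  | some (Sum.inr (Sum.inl i)), some (Sum.inl i') =>
      rcases eq_or_ne i' i with rfl | hii
      · exact absurd (keysymm (some (Sum.inl i')) (edist_self_le_one _)
          (adj_edist_le_one (adj_ab i'))) not_false
      · exact Or.inr (Or.inl ⟨i', i, hii, by rw [Finset.pair_comm]⟩)
  | some (Sum.inr (Sum.inl i)), some (Sum.inr (Sum.inl i')) =>
      exact Or.inl ⟨i, i', by simpa using huv, rfl⟩
  | some (Sum.inr (Sum.inl i)), some (Sum.inr (Sum.inr j)) =>
      exact Or.inr (Or.inr ⟨i, j, rfl⟩)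
  | some (Sum.inr (Sum.inr j)), some (Sum.inr (Sum.inl i)) =>
      exact Or.inr (Or.inr ⟨i, j, by rw [Finset.pair_comm]⟩)

end H2Aux

open H2Aux in
/-- If `m = 2k₁ + k₂ + 1 ≥ 4` is the number of vertices of `H₂(k₁,k₂)`, then the number of
multipackings of `H₂(k₁,k₂)` is at most `(3/8)m² − (1/2)m + 17/8`. -/
theorem card_multipackings_H2_le (k₁ k₂ m : ℕ) (hm : m = 2 * k₁ + k₂ + 1) (hm4 : 4 ≤ m) :
    (Nat.card {M : Finset (H2V k₁ k₂) // Multipacking (H2 k₁ k₂) M} : ℚ) ≤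
      3 / 8 * m ^ 2 - 1 / 2 * m + 17 / 8 := by
  classical
  set V := H2V k₁ k₂
  set b : Fin k₁ → V := fun i => some (Sum.inr (Sum.inl i)) with hb
  set a : Fin k₁ → V := fun i => some (Sum.inl i) with ha
  set c : Fin k₂ → V := fun j => some (Sum.inr (Sum.inr j)) with hc
  -- the covering family
  set S : Finset (Finset V) :=
      ((Finset.univ : Finset V).powersetCard 0) ∪ ((Finset.univ : Finset V).powersetCard 1) ∪
      ((Finset.univ.powersetCard 2 : Finset (Finset (Fin k₁))).image (fun s => s.image b)) ∪
      (((Finset.univ : Finset (Fin k₁)).offDiag).image (fun p => ({a p.1, b p.2} : Finset V))) ∪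
      ((Finset.univ : Finset (Fin k₁ × Fin k₂)).image (fun p => ({b p.1, c p.2} : Finset V)))
      with hS
  -- every multipacking lies in S
  have hsub : ∀ M : Finset V, Multipacking (H2 k₁ k₂) M → M ∈ S := by
    intro M hM
    have hcard := card_le_two hM
    interval_cases h : M.card
    · simp only [hS, Finset.mem_union]
      exact Or.inl (Or.inl (Or.inl (Or.inl (by
        rw [Finset.mem_powersetCard]; exact ⟨Finset.subset_univ _, h⟩))))
    · simp only [hS, Finset.mem_union]
      exact Or.inl (Or.inl (Or.inl (Or.inr (by
        rw [Finset.mem_powersetCard]; exact ⟨Finset.subset_univ _, h⟩))))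
    · obtain ⟨u, v, huv, hMuv⟩ := Finset.card_eq_two.mp h
      have hu : u ∈ M := by rw [hMuv]; simp
      have hv : v ∈ M := by rw [hMuv]; simp
      rcases pair_cases hM hu hv huv with ⟨i, j, hij, hpr⟩ | ⟨i, j, hij, hpr⟩ | ⟨i, j, hpr⟩
      · simp only [hS, Finset.mem_union]
        refine Or.inl (Or.inl (Or.inr ?_))
        refine Finset.mem_image.mpr ⟨{i, j}, ?_, ?_⟩
        · simp [Finset.mem_powersetCard, Finset.card_pair hij]
        · rw [hMuv, hpr]; simp [Finset.image_insert]; rfl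
      · simp only [hS, Finset.mem_union]
        refine Or.inl (Or.inr ?_)
        refine Finset.mem_image.mpr ⟨(i, j), by simp [Finset.mem_offDiag, hij], ?_⟩
        rw [hMuv, hpr]
      · simp only [hS, Finset.mem_union]
        refine Or.inr ?_
        exact Finset.mem_image.mpr ⟨(i, j), by simp, by rw [hMuv, hpr]⟩
  -- cardinality bound
  have hcount : Nat.card {M : Finset V // Multipacking (H2 k₁ k₂) M} ≤ S.card := by
    have : {M : Finset V | Multipacking (H2 k₁ k₂) M} ⊆ ↑S := fun M hM => hsub M hM
    calc Nat.card {M : Finset V // Multipacking (H2 k₁ k₂) M}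
        = {M : Finset V | Multipacking (H2 k₁ k₂) M}.ncard := Nat.card_coe_set_eq _
      _ ≤ (↑S : Set (Finset V)).ncard := Set.ncard_le_ncard this (Set.toFinite _)
      _ = S.card := Set.ncard_coe_finset _
  have hScard : S.card ≤ 1 + m + k₁.choose 2 + (k₁ * k₁ - k₁) + k₁ * k₂ := by
    have hmV : Fintype.card V = m := by
      show Fintype.card (H2V k₁ k₂) = m
      simp only [H2V, Fintype.card_option, Fintype.card_sum, Fintype.card_fin]
      omega
    have hA : ((Finset.univ : Finset V).powersetCard 0).card ≤ 1 := by simp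
    have hB : ((Finset.univ : Finset V).powersetCard 1).card ≤ m := by
      rw [Finset.card_powersetCard, Finset.card_univ, hmV, Nat.choose_one_right]
    have hC : ((Finset.univ.powersetCard 2 : Finset (Finset (Fin k₁))).image
        (fun s => s.image b)).card ≤ k₁.choose 2 :=
      le_trans Finset.card_image_le (by rw [Finset.card_powersetCard]; simp)
    have hD : (((Finset.univ : Finset (Fin k₁)).offDiag).image
        (fun p => ({a p.1, b p.2} : Finset V))).card ≤ k₁ * k₁ - k₁ :=
      le_trans Finset.card_image_le (by rw [Finset.offDiag_card]; simp)
    have hE : ((Finset.univ : Finset (Fin k₁ × Fin k₂)).image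
        (fun p => ({b p.1, c p.2} : Finset V))).card ≤ k₁ * k₂ :=
      le_trans Finset.card_image_le (by simp)
    have u1 := Finset.card_union_le
      (((Finset.univ : Finset V).powersetCard 0) ∪ ((Finset.univ : Finset V).powersetCard 1) ∪
        ((Finset.univ.powersetCard 2 : Finset (Finset (Fin k₁))).image (fun s => s.image b)) ∪
        (((Finset.univ : Finset (Fin k₁)).offDiag).image
          (fun p => ({a p.1, b p.2} : Finset V))))
      ((Finset.univ : Finset (Fin k₁ × Fin k₂)).image (fun p => ({b p.1, c p.2} : Finset V)))
    have u2 := Finset.card_union_le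
      (((Finset.univ : Finset V).powersetCard 0) ∪ ((Finset.univ : Finset V).powersetCard 1) ∪
        ((Finset.univ.powersetCard 2 : Finset (Finset (Fin k₁))).image (fun s => s.image b)))
      (((Finset.univ : Finset (Fin k₁)).offDiag).image
        (fun p => ({a p.1, b p.2} : Finset V)))
    have u3 := Finset.card_union_le
      (((Finset.univ : Finset V).powersetCard 0) ∪ ((Finset.univ : Finset V).powersetCard 1))
      ((Finset.univ.powersetCard 2 : Finset (Finset (Fin k₁))).image (fun s => s.image b))
    have u4 := Finset.card_union_le
      ((Finset.univ : Finset V).powersetCard 0) ((Finset.univ : Finset V).powersetCard 1)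
    rw [hS]
    omega
  -- final arithmetic
  have hle : (Nat.card {M : Finset V // Multipacking (H2 k₁ k₂) M} : ℚ) ≤
      1 + m + (k₁.choose 2 : ℚ) + ((k₁ * k₁ - k₁ : ℕ) : ℚ) + k₁ * k₂ := by
    have := hcount.trans hScard
    exact_mod_cast this
  refine hle.trans ?_
  have hch : (k₁.choose 2 : ℚ) = k₁ * (k₁ - 1) / 2 := by
    exact_mod_cast Nat.cast_choose_two (K := ℚ) k₁
  have hks : ((k₁ * k₁ - k₁ : ℕ) : ℚ) = (k₁ : ℚ) * k₁ - k₁ := by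
    have h : k₁ ≤ k₁ * k₁ := by nlinarith
    push_cast [Nat.cast_sub h]
    ring
  rw [hch, hks]
  subst hm
  have hk : (4 : ℚ) ≤ 2 * k₁ + k₂ + 1 := by exact_mod_cast hm4
  push_cast
  have hkey : (0 : ℚ) ≤ 3 * (k₂ : ℚ) ^ 2 + 4 * (k₁ : ℚ) * (k₂ : ℚ) - 6 * (k₂ : ℚ) := by
    rcases Nat.eq_zero_or_pos k₂ with hk₂ | hk₂
    · subst hk₂; norm_num
    · have hk₂' : (1 : ℚ) ≤ k₂ := by exact_mod_cast hk₂
      rcases Nat.eq_zero_or_pos k₁ with hk₁ | hk₁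
      · have hk₂3 : (3 : ℚ) ≤ k₂ := by
          subst hk₁
          have : 3 ≤ k₂ := by omega
          exact_mod_cast this
        nlinarith [mul_nonneg (by linarith : (0:ℚ) ≤ (k₂:ℚ))
          (by linarith : (0:ℚ) ≤ (k₂:ℚ) - 2), (Nat.cast_nonneg k₁ : (0:ℚ) ≤ k₁),
          mul_nonneg (Nat.cast_nonneg k₁ : (0:ℚ) ≤ k₁) (by linarith : (0:ℚ) ≤ (k₂:ℚ))]
      · have hk₁' : (1 : ℚ) ≤ k₁ := by exact_mod_cast hk₁
        nlinarith [mul_nonneg (by linarith : (0:ℚ) ≤ (k₂:ℚ))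
          (by linarith : (0:ℚ) ≤ 3*(k₂:ℚ) + 4*(k₁:ℚ) - 6)]
  nlinarith [hkey]
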